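/- arXiv:0910.3578 — 3 statements merged into one kernel-verified Lean document; each statement's English description precedes it below -/
import Mathlib

section
/- Let a, b ∈ ℂ with a ≠ 0 and b ∈ ℝ, and let d(w) = conj(a) w² + 2 b w + a. Then both roots of d lie on the unit circle |w| = 1 if and only if |a| ≥ |b|; and if |a| < |b| then exactly one root satisfies |w| < 1 and the other satisfies |w| > 1. -/
open Complex ComplexConjugate

/-- for a ≠ 0 and real b, with w₁, w₂ the roots of
d(w) = conj(a)·w² + 2·b·w + a: both roots lie on the unit circle iff |a| ≥ |b|;
if |a| < |b| then exactly one root is inside and the other outside the unit circle. -/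
theorem stmt3 (a : ℂ) (b : ℝ) (ha : a ≠ 0) (w₁ w₂ : ℂ)
    (hroots : ∀ w : ℂ,
      conj a * w ^ 2 + 2 * (b : ℂ) * w + a = conj a * (w - w₁) * (w - w₂)) :
    ((‖w₁‖ = 1 ∧ ‖w₂‖ = 1) ↔ |b| ≤ ‖a‖) ∧
    (‖a‖ < |b| →
      (‖w₁‖ < 1 ∧ 1 < ‖w₂‖) ∨
      (1 < ‖w₁‖ ∧ ‖w₂‖ < 1)) := by
  have hconj : conj a ≠ 0 := by simpa using ha
  have hP : conj a * (w₁ * w₂) = a := by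
    have h0 := hroots 0
    linear_combination -h0
  have hS : conj a * (w₁ + w₂) = -(2*(b:ℂ)) := by
    have h1 := hroots 1
    have h2 := hroots (-1)
    linear_combination (h1 - h2)/2
  have habsa : ‖a‖ ≠ 0 := by simpa using ha
  have habsa' : 0 < ‖a‖ := norm_pos_iff.mpr ha
  have habsP : ‖w₁‖ * ‖w₂‖ = 1 := by
    have h := congrArg (‖·‖) hP
    rw [norm_mul, norm_mul, Complex.norm_conj] at h
    field_simp at h
    nlinarith [h]
  have habsS : ‖a‖ * ‖w₁ + w₂‖ = 2 * |b| := by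
    have h := congrArg (‖·‖) hS
    rw [norm_mul, Complex.norm_conj] at h
    rw [h]
    simp [abs_mul]
  have fwd : (‖w₁‖ = 1 ∧ ‖w₂‖ = 1) → |b| ≤ ‖a‖ := by
    rintro ⟨h1, h2⟩
    have htri : ‖w₁ + w₂‖ ≤ 2 := by
      calc ‖w₁ + w₂‖ ≤ ‖w₁‖ + ‖w₂‖ := norm_add_le _ _
        _ = 2 := by rw [h1, h2]; norm_num
    nlinarith [habsS, htri]
  constructor
  · constructor
    · exact fwd
    · intro hba
      by_cases h1 : ‖w₁‖ = 1
      · refine ⟨h1, ?_⟩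
        rw [h1, one_mul] at habsP
        exact habsP
      · exfalso
        have hw1 : conj a * w₁ ^ 2 + 2 * (b:ℂ) * w₁ + a = 0 := by
          have := hroots w₁; simpa using this
        have hw1ne : w₁ ≠ 0 := by
          intro h; apply ha; rw [h] at hP; simpa using hP.symm
        have hcw1 : conj w₁ ≠ 0 := by simpa using hw1ne
        have hv : conj a * ((conj w₁)⁻¹) ^ 2 + 2 * (b:ℂ) * ((conj w₁)⁻¹) + a = 0 := by
          have hc := congrArg conj hw1
          simp only [map_add, map_mul, map_pow, Complex.conj_conj, map_ofNat,
            Complex.conj_ofReal, map_zero] at hc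
          field_simp
          linear_combination hc
        have hcase : (conj w₁)⁻¹ = w₁ ∨ (conj w₁)⁻¹ = w₂ := by
          have h := hroots ((conj w₁)⁻¹)
          rw [hv] at h
          rcases mul_eq_zero.mp h.symm with h' | h'
          · rcases mul_eq_zero.mp h' with h'' | h''
            · exact absurd h'' hconj
            · left; exact sub_eq_zero.mp h''
          · right; exact sub_eq_zero.mp h'
        rcases hcase with hc1 | hc2
        · apply h1
          have hmul := inv_mul_cancel₀ hcw1
          rw [hc1, Complex.mul_conj] at hmul
          have hn : Complex.normSq w₁ = 1 := by exact_mod_cast hmul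
          have hn2 : (‖w₁‖) ^ 2 = 1 := by rw [Complex.sq_norm]; exact hn
          have hfac : (‖w₁‖ - 1) * (‖w₁‖ + 1) = 0 := by nlinarith
          rcases mul_eq_zero.mp hfac with h' | h'
          · linarith
          · nlinarith [norm_nonneg w₁]
        · have hkey : (w₁ + w₂) * conj w₁ = ((Complex.normSq w₁ + 1 : ℝ) : ℂ) := by
            rw [← hc2]
            push_cast
            field_simp
            linear_combination Complex.mul_conj w₁
          have habs2 : ‖w₁ + w₂‖ * ‖w₁‖ = Complex.normSq w₁ + 1 := by
            have h := congrArg (‖·‖) hkey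
            rw [norm_mul, Complex.norm_conj, Complex.norm_real, Real.norm_eq_abs] at h
            rw [h, _root_.abs_of_nonneg]
            linarith [Complex.normSq_nonneg w₁]
          have hn : Complex.normSq w₁ = (‖w₁‖) ^ 2 := (Complex.sq_norm w₁).symm
          have hw1pos : 0 < ‖w₁‖ := norm_pos_iff.mpr hw1ne
          have hne1 : (‖w₁‖ - 1) ^ 2 > 0 := by
            have : ‖w₁‖ - 1 ≠ 0 := sub_ne_zero.mpr h1
            positivity
          nlinarith [habsS, hba, habs2, hn, hw1pos, hne1, habsa']
  · intro hlt
    have hne : ‖w₁‖ ≠ 1 := by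
      intro h
      have h2 : ‖w₂‖ = 1 := by rw [h, one_mul] at habsP; exact habsP
      exact absurd (fwd ⟨h, h2⟩) (not_le.mpr hlt)
    have hw1pos : 0 < ‖w₁‖ := by
      rcases (norm_nonneg w₁).lt_or_eq with h | h
      · exact h
      · exfalso; rw [← h] at habsP; simp at habsP
    rcases lt_or_gt_of_ne hne with h | h
    · left
      refine ⟨h, ?_⟩
      nlinarith [habsP]
    · right
      refine ⟨h, ?_⟩
      nlinarith [habsP]
end

section
/- Let Ω ⊆ ℂ be open and connected, and f polyanalytic of order ν on Ω (∂^{ν+1} f/∂z̄^{ν+1} = 0). Then there exist functions h₀, …, h_ν holomorphic on Ω such that f(z) = h₀(z) + conj(z)·h₁(z) + ⋯ + conj(z)^ν · h_ν(z) for all z ∈ Ω. -/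
open Complex ComplexConjugate

/-- The Wirtinger derivative ∂/∂z̄ = ½(∂/∂x + i∂/∂y). -/
noncomputable def wbar (f : ℂ → ℂ) : ℂ → ℂ := fun z =>
  (fderiv ℝ f z 1 + Complex.I * fderiv ℝ f z Complex.I) / 2

lemma wbar_of_holo {f : ℂ → ℂ} {z : ℂ} (hf : DifferentiableAt ℂ f z) : wbar f z = 0 := by
  have h := hf.fderiv_restrictScalars ℝ
  have h1 : fderiv ℝ f z 1 = fderiv ℂ f z 1 := by rw [h]; rfl
  have hI : fderiv ℝ f z Complex.I = fderiv ℂ f z Complex.I := by rw [h]; rfl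
  have h2 : fderiv ℂ f z Complex.I = Complex.I * fderiv ℂ f z 1 := by
    have := (fderiv ℂ f z).map_smul Complex.I (1 : ℂ)
    simpa [smul_eq_mul] using this
  rw [wbar, h1, hI, h2]
  have : Complex.I * (Complex.I * fderiv ℂ f z 1) = -fderiv ℂ f z 1 := by
    rw [← mul_assoc, Complex.I_mul_I]; ring
  rw [this]; ring

lemma holo_of_wbar {f : ℂ → ℂ} {z : ℂ} (hf : DifferentiableAt ℝ f z)
    (hw : wbar f z = 0) : DifferentiableAt ℂ f z := by
  rw [differentiableAt_iff_restrictScalars ℝ hf]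
  set L := fderiv ℝ f z with hL
  have h0 : L 1 + Complex.I * L Complex.I = 0 := by
    have := hw
    rw [wbar] at this
    field_simp at this
    exact (by simpa using this : fderiv ℝ f z 1 + Complex.I * fderiv ℝ f z Complex.I = 0)
  have hI : L Complex.I = Complex.I * L 1 := by
    linear_combination (-Complex.I) * h0 + (L Complex.I) * Complex.I_sq
  refine ⟨ContinuousLinearMap.smulRight (1 : ℂ →L[ℂ] ℂ) (L 1), ?_⟩
  ext w
  have hw2 : (w.re : ℝ) • (1 : ℂ) + (w.im : ℝ) • Complex.I = w := by
    simp [Complex.real_smul, Complex.re_add_im]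
  have key : L w = w * L 1 := by
    calc L w = L ((w.re : ℝ) • (1 : ℂ) + (w.im : ℝ) • Complex.I) := by rw [hw2]
    _ = (w.re : ℝ) • L 1 + (w.im : ℝ) • L Complex.I := by rw [map_add, map_smul, map_smul]
    _ = (w.re : ℂ) * L 1 + (w.im : ℂ) * (Complex.I * L 1) := by
        rw [hI, Complex.real_smul, Complex.real_smul]
    _ = ((w.re : ℂ) + (w.im : ℂ) * Complex.I) * L 1 := by ring
    _ = w * L 1 := by rw [Complex.re_add_im]
  simp [key, smul_eq_mul]

lemma wbar_mul {p q : ℂ → ℂ} {z : ℂ} (hp : DifferentiableAt ℝ p z)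
    (hq : DifferentiableAt ℝ q z) :
    wbar (fun w => p w * q w) z = wbar p z * q z + p z * wbar q z := by
  simp only [wbar, fderiv_fun_mul hp hq, ContinuousLinearMap.add_apply,
    ContinuousLinearMap.smul_apply, smul_eq_mul]
  ring

lemma wbar_sub {p q : ℂ → ℂ} {z : ℂ} (hp : DifferentiableAt ℝ p z)
    (hq : DifferentiableAt ℝ q z) :
    wbar (fun w => p w - q w) z = wbar p z - wbar q z := by
  simp only [wbar, fderiv_fun_sub hp hq, ContinuousLinearMap.sub_apply]
  ring

lemma diffAt_conj (z : ℂ) : DifferentiableAt ℝ (fun w : ℂ => (conj w : ℂ)) z := by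
  have : (fun w : ℂ => (conj w : ℂ)) = ⇑Complex.conjCLE := by
    funext w; simp
  rw [this]
  exact Complex.conjCLE.differentiable.differentiableAt

lemma wbar_conj (z : ℂ) : wbar (fun w : ℂ => (conj w : ℂ)) z = 1 := by
  have hfun : (fun w : ℂ => (conj w : ℂ)) = ⇑Complex.conjCLE := by
    funext w; simp
  rw [wbar, hfun, Complex.conjCLE.fderiv]
  simp only [ContinuousLinearEquiv.coe_coe, Complex.conjCLE_apply, map_one, Complex.conj_I,
    mul_neg, Complex.I_mul_I, neg_neg]
  norm_num

lemma wbar_conj_pow (m : ℕ) (z : ℂ) :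
    wbar (fun w : ℂ => (conj w : ℂ) ^ (m + 1)) z = (m + 1 : ℂ) * (conj z) ^ m := by
  induction m with
  | zero => simpa using wbar_conj z
  | succ n ih =>
    have hfun : (fun w : ℂ => (conj w : ℂ) ^ (n + 2)) =
        fun w => (conj w : ℂ) * (conj w : ℂ) ^ (n + 1) := by
      funext w; ring
    rw [hfun, wbar_mul (q := fun w => (conj w : ℂ) ^ (n + 1)) (diffAt_conj z) ((diffAt_conj z).pow (n + 1)), wbar_conj z, ih]
    push_cast
    ring

lemma wbar_sum {ι : Type*} (s : Finset ι) (t : ι → ℂ → ℂ) (z : ℂ)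
    (ht : ∀ i ∈ s, DifferentiableAt ℝ (t i) z) :
    wbar (fun w => ∑ i ∈ s, t i w) z = ∑ i ∈ s, wbar (t i) z := by
  classical
  induction s using Finset.induction with
  | empty =>
    simp only [Finset.sum_empty]
    simp [wbar]
  | insert a s' hnot ih =>
    have hta := ht a (Finset.mem_insert_self a s')
    have hts : ∀ i ∈ s', DifferentiableAt ℝ (t i) z := fun i hi =>
      ht i (Finset.mem_insert_of_mem hi)
    have hsum : DifferentiableAt ℝ (fun w => ∑ i ∈ s', t i w) z :=
      DifferentiableAt.fun_sum hts
    have hfun : (fun w => ∑ i ∈ insert a s', t i w) =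
        fun w => t a w + ∑ i ∈ s', t i w := by
      funext w; rw [Finset.sum_insert hnot]
    have hadd : wbar (fun w => t a w + ∑ i ∈ s', t i w) z =
        wbar (t a) z + wbar (fun w => ∑ i ∈ s', t i w) z := by
      simp only [wbar, fderiv_fun_add hta hsum, ContinuousLinearMap.add_apply]
      ring
    rw [hfun, hadd, ih hts, Finset.sum_insert hnot]

lemma contDiffOn_wbar {f : ℂ → ℂ} {Ω : Set ℂ} (hΩ : IsOpen Ω) (n : WithTop ℕ∞)
    (hf : ContDiffOn ℝ (n + 1) f Ω) : ContDiffOn ℝ n (wbar f) Ω := by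
  have hd : ContDiffOn ℝ n (fderiv ℝ f) Ω := hf.fderiv_of_isOpen hΩ le_rfl
  have h1 : ContDiffOn ℝ n (fun z => fderiv ℝ f z 1) Ω := hd.clm_apply contDiffOn_const
  have hI : ContDiffOn ℝ n (fun z => fderiv ℝ f z Complex.I) Ω :=
    hd.clm_apply contDiffOn_const
  exact (h1.add (contDiffOn_const.mul hI)).div_const 2

lemma key_lemma (Ω : Set ℂ) (hΩ : IsOpen Ω) (ν : ℕ) :
    ∀ f : ℂ → ℂ, ContDiffOn ℝ (ν + 1) f Ω →
      (∀ z ∈ Ω, (wbar^[ν + 1] f) z = 0) →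
      ∃ h : ℕ → ℂ → ℂ, (∀ j ≤ ν, DifferentiableOn ℂ (h j) Ω) ∧
        ∀ z ∈ Ω, f z = ∑ j ∈ Finset.range (ν + 1), (conj z) ^ j * h j z := by
  induction ν with
  | zero =>
    intro f hf hp
    refine ⟨fun _ => f, ?_, ?_⟩
    · intro j hj z hz
      have hd : DifferentiableAt ℝ f z :=
        (hf.differentiableOn (by simp)).differentiableAt (hΩ.mem_nhds hz)
      exact (holo_of_wbar hd (by simpa using hp z hz)).differentiableWithinAt
    · intro z hz; simp
  | succ ν ih =>
    intro f hf hp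
    have hf' : ContDiffOn ℝ ((ν : WithTop ℕ∞) + 1 + 1) f Ω := by
      exact_mod_cast hf
    have hg1 : ContDiffOn ℝ ((ν : ℕ) + 1) (wbar f) Ω :=
      contDiffOn_wbar hΩ ((ν : WithTop ℕ∞) + 1) hf'
    have hpg : ∀ z ∈ Ω, (wbar^[ν + 1] (wbar f)) z = 0 := by
      intro z hz
      have := hp z hz
      rwa [Function.iterate_succ_apply] at this
    obtain ⟨h, hdiff, heq⟩ := ih (wbar f) hg1 hpg
    -- differentiability of f on Ω
    have hfd : ∀ z ∈ Ω, DifferentiableAt ℝ f z := fun z hz =>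
      (hf.differentiableOn (by simp)).differentiableAt (hΩ.mem_nhds hz)
    -- the antiderivative in z̄
    set F : ℂ → ℂ :=
      fun w => ∑ j ∈ Finset.range (ν + 1), (conj w : ℂ) ^ (j + 1) *
        (((j : ℂ) + 1)⁻¹ * h j w) with hFdef
    have hhd : ∀ j, j ∈ Finset.range (ν + 1) → ∀ z ∈ Ω,
        DifferentiableAt ℂ (h j) z := by
      intro j hj z hz
      exact (hdiff j (Nat.lt_succ_iff.mp (Finset.mem_range.mp hj)) z
        hz).differentiableAt (hΩ.mem_nhds hz)
    have htermd : ∀ z ∈ Ω, ∀ j ∈ Finset.range (ν + 1),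
        DifferentiableAt ℝ
          (fun w => (conj w : ℂ) ^ (j + 1) * (((j : ℂ) + 1)⁻¹ * h j w)) z := by
      intro z hz j hj
      exact ((diffAt_conj z).pow (j + 1)).mul
        ((((hhd j hj z hz).restrictScalars ℝ)).const_mul _)
    have hFd : ∀ z ∈ Ω, DifferentiableAt ℝ F z := by
      intro z hz
      exact DifferentiableAt.fun_sum (htermd z hz)
    have hwF : ∀ z ∈ Ω, wbar F z = wbar f z := by
      intro z hz
      have h1 : wbar F z = ∑ j ∈ Finset.range (ν + 1),
          wbar (fun w => (conj w : ℂ) ^ (j + 1) * (((j : ℂ) + 1)⁻¹ * h j w)) z :=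
        wbar_sum _ _ z (htermd z hz)
      have h2 : ∀ j ∈ Finset.range (ν + 1),
          wbar (fun w => (conj w : ℂ) ^ (j + 1) * (((j : ℂ) + 1)⁻¹ * h j w)) z =
            (conj z : ℂ) ^ j * h j z := by
        intro j hj
        have hc : DifferentiableAt ℝ (fun w => ((j : ℂ) + 1)⁻¹ * h j w) z :=
          ((hhd j hj z hz).restrictScalars ℝ).const_mul _
        rw [wbar_mul (p := fun w => (conj w : ℂ) ^ (j + 1)) ((diffAt_conj z).pow (j + 1)) hc, wbar_conj_pow,
          wbar_of_holo ((hhd j hj z hz).const_mul _)]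
        have hne : (j : ℂ) + 1 ≠ 0 := by
          exact_mod_cast Nat.succ_ne_zero j
        field_simp
        ring
      rw [h1, Finset.sum_congr rfl h2, ← heq z hz]
    -- f - F is holomorphic on Ω
    have hφ : ∀ z ∈ Ω, DifferentiableAt ℂ (fun w => f w - F w) z := by
      intro z hz
      refine holo_of_wbar ((hfd z hz).sub (hFd z hz)) ?_
      rw [wbar_sub (hfd z hz) (hFd z hz), hwF z hz, sub_self]
    refine ⟨fun j => Nat.casesOn j (fun w => f w - F w)
      (fun j w => ((j : ℂ) + 1)⁻¹ * h j w), ?_, ?_⟩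
    · intro j hj
      cases j with
      | zero =>
        exact fun z hz => (hφ z hz).differentiableWithinAt
      | succ j =>
        have hj' : j ≤ ν := Nat.succ_le_succ_iff.mp hj
        intro z hz
        exact (hdiff j hj' z hz).const_mul _
    · intro z hz
      rw [Finset.sum_range_succ']
      simp only [pow_zero, one_mul]
      have : (∑ j ∈ Finset.range (ν + 1), (conj z : ℂ) ^ (j + 1) *
          (((j : ℂ) + 1)⁻¹ * h j z)) = F z := rfl
      rw [this]
      show f z = F z + (f z - F z)
      ring

/-- a polyanalytic function of order ν on an open connected Ω
decomposes as f(z) = h₀(z) + conj(z)h₁(z) + ⋯ + conj(z)^ν·h_ν(z) with h_j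
holomorphic on Ω. -/
theorem stmt12 (Ω : Set ℂ) (hΩ : IsOpen Ω) (hconn : IsConnected Ω) (ν : ℕ)
    (f : ℂ → ℂ) (hf : ContDiffOn ℝ (ν + 1) f Ω)
    (hpoly : ∀ z ∈ Ω, (wbar^[ν + 1] f) z = 0) :
    ∃ h : ℕ → ℂ → ℂ, (∀ j ≤ ν, DifferentiableOn ℂ (h j) Ω) ∧
      ∀ z ∈ Ω, f z = ∑ j ∈ Finset.range (ν + 1), (conj z) ^ j * h j z :=
  key_lemma Ω hΩ ν f hf hpoly
end

section
/- Let f(z) = conj(z)·(z − c₁)⋯(z − c_l) for distinct points c₁, …, c_l ∈ ℂ, all nonzero, and fix j ∈ {1,…,l}. For every r > 0, the restriction of f to the circle |z − c_j| = r extends holomorphically to the disc |z − c_j| < r. Yet f is not holomorphic on ℂ (its ∂/∂z̄ derivative is the nonzero polynomial (z − c₁)⋯(z − c_l)). -/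
open Complex Metric ComplexConjugate

/-- f(z) = conj(z)(z-c₁)⋯(z-c_l) (c_i distinct, nonzero) extends
holomorphically inside every circle centered at any c_j, yet f is not holomorphic:
∂f/∂z̄ = (z-c₁)⋯(z-c_l) ≠ 0. -/
theorem stmt17 (l : ℕ) (hl : 0 < l) (c : Fin l → ℂ) (hinj : Function.Injective c)
    (hne : ∀ i, c i ≠ 0) (f : ℂ → ℂ)
    (hf : ∀ z, f z = conj z * ∏ i, (z - c i))
    (j : Fin l) (r : ℝ) (hr : 0 < r) :
    (∃ F : ℂ → ℂ, DifferentiableOn ℂ F (ball (c j) r) ∧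
      ContinuousOn F (closedBall (c j) r) ∧
      ∀ z ∈ sphere (c j) r, F z = f z) ∧
    (∀ z, wbar f z = ∏ i, (z - c i)) ∧
    ¬ Differentiable ℂ f := by
  set P : ℂ → ℂ := fun z => ∏ i, (z - c i) with hP
  have hPdiff : Differentiable ℂ P := by
    apply Differentiable.fun_finsetProd
    intro i _
    exact differentiable_id.sub_const _
  have hw : ∀ z, wbar f z = P z := by
    intro z
    have hPz : HasFDerivAt P (((1 : ℂ →L[ℂ] ℂ).smulRight (deriv P z)).restrictScalars ℝ) z :=
      ((hPdiff z).hasDerivAt.hasFDerivAt).restrictScalars ℝ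
    have hconj : HasFDerivAt (fun z : ℂ => conj z) (Complex.conjCLE.toContinuousLinearMap) z :=
      Complex.conjCLE.hasFDerivAt
    have hfd : HasFDerivAt f
        (conj z • (((1 : ℂ →L[ℂ] ℂ).smulRight (deriv P z)).restrictScalars ℝ)
          + P z • Complex.conjCLE.toContinuousLinearMap) z := by
      refine ((hconj.mul hPz).congr_of_eventuallyEq ?_)
      filter_upwards with w
      exact hf w
    simp only [wbar, hfd.fderiv]
    simp [Complex.conjCLE_apply, smul_eq_mul]
    ring_nf
    simp [Complex.I_sq]
    ring
  refine ⟨?_, fun z => hw z, ?_⟩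
  · refine ⟨fun z => (conj (c j) * (z - c j) + (r : ℂ)^2) * ∏ i ∈ Finset.univ.erase j, (z - c i),
      ?_, ?_, ?_⟩
    · apply Differentiable.differentiableOn
      apply Differentiable.mul
      · exact ((differentiable_const _).mul (differentiable_id.sub_const _)).add
          (differentiable_const _)
      · exact Differentiable.fun_finsetProd (fun i _ => differentiable_id.sub_const _)
    · apply Continuous.continuousOn
      apply Continuous.mul
      · fun_prop
      · exact continuous_finset_prod _ (fun i _ => (continuous_id.sub continuous_const))
    · intro z hz
      have hzr : ‖z - c j‖ = r := by
        simpa [Complex.dist_eq] using (mem_sphere.mp hz)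
      have hmc : (z - c j) * conj (z - c j) = (r : ℂ)^2 := by
        rw [Complex.mul_conj, Complex.normSq_eq_norm_sq, hzr]
        push_cast
        ring
      have hsplit : (∏ i, (z - c i)) = (z - c j) * ∏ i ∈ Finset.univ.erase j, (z - c i) :=
        (Finset.mul_prod_erase Finset.univ _ (Finset.mem_univ j)).symm
      show (conj (c j) * (z - c j) + (r : ℂ)^2) * ∏ i ∈ Finset.univ.erase j, (z - c i) = f z
      rw [hf z, hsplit, ← mul_assoc]
      congr 1
      have hcz : (conj z : ℂ) = conj (c j) + conj (z - c j) := by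
        rw [← map_add]
        congr 1
        ring
      rw [hcz]
      linear_combination -hmc
  · intro hdiff
    have h0 : wbar f 0 = 0 := by
      have hF := (hdiff 0).hasFDerivAt
      have hre : fderiv ℝ f 0 = (fderiv ℂ f 0).restrictScalars ℝ :=
        (hF.restrictScalars ℝ).fderiv
      have hI : fderiv ℂ f 0 Complex.I = Complex.I * fderiv ℂ f 0 1 := by
        have := (fderiv ℂ f 0).map_smul Complex.I (1 : ℂ)
        simpa [smul_eq_mul] using this
      simp only [wbar, hre, ContinuousLinearMap.coe_restrictScalars', hI]
      ring_nf
      simp [Complex.I_sq]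
    rw [hw 0] at h0
    have hne0 : ∀ i ∈ Finset.univ, (0 : ℂ) - c i ≠ 0 := by
      intro i _
      simpa using hne i
    exact (Finset.prod_ne_zero_iff.mpr hne0) h0
end
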